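/- Define L(t,x) = tanh(x)·cos(t) and M(t,x) = sin(t). Then (L, M) satisfies the linearized Bäcklund system around the sine-Gordon kink: for all (t,x) ∈ ℝ², ∂_x L(t,x) − ∂_t M(t,x) = −tanh(x)·L(t,x) and ∂_t L(t,x) − ∂_x M(t,x) = −tanh(x)·M(t,x). (The odd resonance L of the kink and the resonance M of the vacuum are linked by the linearized Bäcklund transformation.) -/

import Mathlib

/-- The odd resonance of sine-Gordon around the kink. -/
noncomputable def resL (t x : ℝ) : ℝ := Real.tanh x * Real.cos t

/-- The resonance of sine-Gordon around the vacuum. -/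
noncomputable def resM (t _x : ℝ) : ℝ := Real.sin t

lemma hasDerivAt_tanh (x : ℝ) : HasDerivAt Real.tanh (1 - Real.tanh x ^ 2) x := by
  have h := ((Real.hasDerivAt_sinh x).div (Real.hasDerivAt_cosh x)
    (ne_of_gt (Real.cosh_pos x)))
  have hfun : (fun y => Real.sinh y / Real.cosh y) = Real.tanh := by
    funext y; rw [Real.tanh_eq_sinh_div_cosh]
  rw [show (Real.sinh / Real.cosh) = (fun y => Real.sinh y / Real.cosh y) from rfl, hfun] at h
  refine h.congr_deriv ?_
  have hc := Real.cosh_pos x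
  rw [Real.tanh_eq_sinh_div_cosh]
  field_simp

/-- The pair (L, M) = (tanh x · cos t, sin t) satisfies the linearized
Bäcklund system around the sine-Gordon kink. -/
theorem resonances_satisfy_linearized_backlund :
    ∀ t x : ℝ,
      deriv (fun x' => resL t x') x - deriv (fun t' => resM t' x) t
        = -Real.tanh x * resL t x
      ∧ deriv (fun t' => resL t' x) t - deriv (fun x' => resM t x') x
        = -Real.tanh x * resM t x := by
  intro t x
  have h1 : deriv (fun x' => resL t x') x = (1 - Real.tanh x ^ 2) * Real.cos t := by
    have : HasDerivAt (fun x' => resL t x') ((1 - Real.tanh x ^ 2) * Real.cos t) x :=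
      (hasDerivAt_tanh x).mul_const _
    exact this.deriv
  have h2 : deriv (fun t' => resM t' x) t = Real.cos t := by
    simp [resM, Real.deriv_sin]
  have h3 : deriv (fun t' => resL t' x) t = Real.tanh x * (-Real.sin t) := by
    have : HasDerivAt (fun t' => resL t' x) (Real.tanh x * (-Real.sin t)) t :=
      (Real.hasDerivAt_cos t).const_mul _
    exact this.deriv
  have h4 : deriv (fun x' => resM t x') x = 0 := by
    simp [resM]
  refine ⟨?_, ?_⟩
  · rw [h1, h2]; unfold resL; ring
  · rw [h3, h4]; unfold resM; ring
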